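/- Let K ⊆ ℝⁿ be closed, φ a strictly convex norm, x ∉ K, a ∈ ξ_K^φ(x), and 0 < t ≤ ρ_K^φ(x) with ρ_K^φ(x) < ∞. Then ρ_K^φ(x) = t · ρ_K^φ(a + t (x − a)). -/

import Mathlib

open Set Filter Metric MeasureTheory Topology ENNReal

noncomputable section

abbrev Euc (n : ℕ) := EuclideanSpace ℝ (Fin n)

def IsNorm {n : ℕ} (φ : Euc n → ℝ) : Prop :=
  (∀ x, φ x = 0 ↔ x = 0) ∧ (∀ (c : ℝ) (x : Euc n), φ (c • x) = |c| * φ x) ∧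
    (∀ x y, φ (x + y) ≤ φ x + φ y)

def StrictlyConvexNorm {n : ℕ} (φ : Euc n → ℝ) : Prop :=
  IsNorm φ ∧ ∀ a b, φ (a + b) = φ a + φ b → φ b • a = φ a • b

def UniformlyConvexNorm {n : ℕ} (φ : Euc n → ℝ) : Prop :=
  IsNorm φ ∧ ∃ γ : ℝ, 0 < γ ∧ ConvexOn ℝ Set.univ (fun x => φ x - γ * ‖x‖)

def distφ {n : ℕ} (φ : Euc n → ℝ) (K : Set (Euc n)) (x : Euc n) : ℝ :=
  sInf {r | ∃ y ∈ K, r = φ (x - y)}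

def nearφ {n : ℕ} (φ : Euc n → ℝ) (K : Set (Euc n)) (x : Euc n) : Set (Euc n) :=
  {a ∈ K | φ (x - a) = distφ φ K x}

def rhoφ {n : ℕ} (φ : Euc n → ℝ) (K : Set (Euc n)) (x : Euc n) : ℝ≥0∞ :=
  sSup {r : ℝ≥0∞ | ∃ s : ℝ, ∃ a ∈ nearφ φ K x,
    r = ENNReal.ofReal s ∧ distφ φ K (a + s • (x - a)) = s * distφ φ K x}

def normalBundle {n : ℕ} (φ : Euc n → ℝ) (K : Set (Euc n)) : Set (Euc n × Euc n) :=
  {p | p.1 ∈ K ∧ φ p.2 = 1 ∧ ∃ s : ℝ, 0 < s ∧ distφ φ K (p.1 + s • p.2) = s}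

def reachφ {n : ℕ} (φ : Euc n → ℝ) (K : Set (Euc n)) (p : Euc n × Euc n) : ℝ≥0∞ :=
  sSup {r : ℝ≥0∞ | ∃ s : ℝ, 0 < s ∧ r = ENNReal.ofReal s ∧ distφ φ K (p.1 + s • p.2) = s}

def cutLocus {n : ℕ} (φ : Euc n → ℝ) (K : Set (Euc n)) : Set (Euc n) :=
  {x | ∃ p ∈ normalBundle φ K, reachφ φ K p ≠ ⊤ ∧
    x = p.1 + (reachφ φ K p).toReal • p.2}

def PtTwiceDiffAt {n : ℕ} (f : Euc n → ℝ) (x : Euc n) : Prop :=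
  ∃ (L : Euc n →L[ℝ] ℝ) (Q : Euc n →L[ℝ] Euc n →L[ℝ] ℝ),
    Tendsto (fun y => |f y - f x - L (y - x) - Q (y - x) (y - x)| / ‖y - x‖ ^ 2)
      (𝓝[≠] x) (𝓝 0)

section Aux

variable {n : ℕ} {φ : Euc n → ℝ} {K : Set (Euc n)}

lemma phi_nonneg (h : IsNorm φ) (v : Euc n) : 0 ≤ φ v := by
  have h0 : φ (0 : Euc n) = 0 := (h.1 0).2 rfl
  have hneg : φ (-v) = φ v := by simpa using h.2.1 (-1) v
  have ht := h.2.2 v (-v)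
  rw [add_neg_cancel, h0, hneg] at ht
  linarith

lemma distφ_le (h : IsNorm φ) {y : Euc n} (hy : y ∈ K) (x : Euc n) :
    distφ φ K x ≤ φ (x - y) :=
  csInf_le ⟨0, fun r ⟨z, _, hz⟩ => hz ▸ phi_nonneg h _⟩ ⟨y, hy, rfl⟩

lemma distφ_nonneg (h : IsNorm φ) (x : Euc n) : 0 ≤ distφ φ K x :=
  Real.sInf_nonneg fun _ ⟨z, _, hz⟩ => hz ▸ phi_nonneg h _

lemma distφ_tri (h : IsNorm φ) (hK : K.Nonempty) (y z : Euc n) :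
    distφ φ K y ≤ φ (y - z) + distφ φ K z := by
  rw [← sub_le_iff_le_add']
  refine le_csInf ⟨φ (z - hK.choose), ⟨hK.choose, hK.choose_spec, rfl⟩⟩ ?_
  rintro r ⟨w, hw, rfl⟩
  rw [sub_le_iff_le_add']
  calc distφ φ K y ≤ φ (y - w) := distφ_le h hw y
    _ = φ ((y - z) + (z - w)) := by abel_nf
    _ ≤ φ (y - z) + φ (z - w) := h.2.2 _ _

/-- downward closure along the normal segment -/
lemma seg_down (h : IsNorm φ) {x a : Euc n} (ha : a ∈ nearφ φ K x) {s s' : ℝ}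
    (h0 : 0 ≤ s') (hss : s' ≤ s)
    (hs : distφ φ K (a + s • (x - a)) = s * distφ φ K x) :
    distφ φ K (a + s' • (x - a)) = s' * distφ φ K x := by
  have hK : K.Nonempty := ⟨a, ha.1⟩
  have hphi : φ (x - a) = distφ φ K x := ha.2
  have hle : distφ φ K (a + s' • (x - a)) ≤ s' * distφ φ K x := by
    have := distφ_le h ha.1 (a + s' • (x - a))
    rwa [add_sub_cancel_left, h.2.1, abs_of_nonneg h0, hphi] at this
  have htri := distφ_tri h hK (a + s • (x - a)) (a + s' • (x - a))
  have hv : (a + s • (x - a)) - (a + s' • (x - a)) = (s - s') • (x - a) := by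
    rw [sub_smul]; abel
  rw [hv, h.2.1, abs_of_nonneg (by linarith), hphi, hs] at htri
  nlinarith [distφ_nonneg h (K := K) x]

lemma seg_one (h : IsNorm φ) {x a : Euc n} (ha : a ∈ nearφ φ K x) {s : ℝ}
    (h0 : 0 ≤ s) (hs1 : s ≤ 1) :
    distφ φ K (a + s • (x - a)) = s * distφ φ K x := by
  apply seg_down h ha h0 hs1
  simp

/-- uniqueness of the nearest point when the segment extends beyond `x` -/
lemma near_uniq (hφ : StrictlyConvexNorm φ) {x a b : Euc n}
    (hd : 0 < distφ φ K x) (ha : a ∈ nearφ φ K x) (hb : b ∈ nearφ φ K x) {s : ℝ}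
    (hs : 1 < s) (hseg : distφ φ K (a + s • (x - a)) = s * distφ φ K x) :
    b = a := by
  set d := distφ φ K x with hdd
  have h := hφ.1
  set z := a + s • (x - a) with hz
  have hu : z - x = (s - 1) • (x - a) := by
    rw [hz, sub_smul, one_smul]; abel
  have hφu : φ (z - x) = (s - 1) * d := by
    rw [hu, h.2.1, abs_of_nonneg (by linarith), ha.2]
  have hφv : φ (x - b) = d := hb.2
  have h1 : φ (z - b) ≤ s * d := by
    calc φ (z - b) = φ ((z - x) + (x - b)) := by abel_nf
      _ ≤ φ (z - x) + φ (x - b) := h.2.2 _ _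
      _ = s * d := by rw [hφu, hφv]; ring
  have h2 : s * d ≤ φ (z - b) := hseg ▸ distφ_le h hb.1 z
  have heq : φ ((z - x) + (x - b)) = φ (z - x) + φ (x - b) := by
    have : φ ((z - x) + (x - b)) = φ (z - b) := by abel_nf
    rw [this, hφu, hφv]; linarith
  have hsc := hφ.2 (z - x) (x - b) heq
  rw [hφu, hφv, hu, smul_smul] at hsc
  -- hsc : (d * (s-1)) • (x - a) = ((s-1)*d) • (x - b)
  have hc : (d * (s - 1)) • (x - a) = (d * (s - 1)) • (x - b) := by
    rw [hsc]; ring_nf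
  have hne : d * (s - 1) ≠ 0 := mul_ne_zero hd.ne' (by linarith)
  have hxab : x - a = x - b := smul_right_injective (Euc n) hne hc
  exact (sub_right_injective hxab).symm
end Aux

section Aux2
variable {n : ℕ} {φ : Euc n → ℝ} {K : Set (Euc n)}

lemma rho_eq (hφ : StrictlyConvexNorm φ) {x a : Euc n}
    (hd : 0 < distφ φ K x) (ha : a ∈ nearφ φ K x) :
    rhoφ φ K x = sSup {r : ℝ≥0∞ | ∃ s : ℝ, 0 ≤ s ∧ r = ENNReal.ofReal s ∧
      distφ φ K (a + s • (x - a)) = s * distφ φ K x} := by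
  apply le_antisymm
  · apply sSup_le
    rintro r ⟨s, b, hb, rfl, hcond⟩
    rcases le_or_gt s 1 with hs1 | hs1
    · refine le_trans (ENNReal.ofReal_le_ofReal hs1) (le_sSup ?_)
      exact ⟨1, zero_le_one, rfl, by simp⟩
    · have hba : a = b := near_uniq hφ hd hb ha hs1 hcond
      rw [← hba] at hcond
      exact le_sSup ⟨s, by linarith, rfl, hcond⟩
  · exact sSup_le_sSup (by rintro r ⟨s, h0, rfl, hc⟩; exact ⟨s, a, ha, rfl, hc⟩)
end Aux2

theorem stmt7 {n : ℕ} (φ : Euc n → ℝ) (hφ : StrictlyConvexNorm φ) (K : Set (Euc n))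
    (hK : IsClosed K) (x : Euc n) (hx : x ∉ K) (a : Euc n) (hax : a ∈ nearφ φ K x)
    (hfin : rhoφ φ K x ≠ ⊤) (t : ℝ) (ht : 0 < t)
    (htle : ENNReal.ofReal t ≤ rhoφ φ K x) :
    rhoφ φ K x = ENNReal.ofReal t * rhoφ φ K (a + t • (x - a)) := by
  have h := hφ.1
  set d := distφ φ K x with hdd
  have hd : 0 < d := by
    rcases (distφ_nonneg h (K := K) x).lt_or_eq with h' | h'
    · exact h'
    · exfalso; apply hx
      have h1 : φ (x - a) = 0 := by rw [hax.2, ← h']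
      have h2 : x = a := by
        have := (h.1 _).1 h1
        rwa [sub_eq_zero] at this
      exact h2 ▸ hax.1
  -- the point a + t • (x - a) is at distance t * d
  have htS : distφ φ K (a + t • (x - a)) = t * d := by
    rcases le_or_gt t 1 with ht1 | ht1
    · exact seg_one h hax ht.le ht1
    · have key : ∀ ε : ℝ, 0 < ε → ε < t - 1 →
          distφ φ K (a + (t - ε) • (x - a)) = (t - ε) * d := by
        intro ε hε hεt
        have h1 : ENNReal.ofReal (t - ε) < rhoφ φ K x :=
          lt_of_lt_of_le ((ENNReal.ofReal_lt_ofReal_iff ht).2 (by linarith)) htle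
        rw [rhoφ, lt_sSup_iff] at h1
        obtain ⟨r, ⟨s, b, hb, rfl, hcond⟩, hlt⟩ := h1
        have hts : t - ε < s := by
          by_contra hc
          push_neg at hc
          exact absurd (ENNReal.ofReal_le_ofReal hc) (not_le.2 hlt)
        have hcond' := seg_down h hb (by linarith) hts.le hcond
        have hba : a = b := near_uniq hφ hd hb hax (by linarith) hcond'
        rw [← hba] at hcond'
        exact hcond'
      have hle : distφ φ K (a + t • (x - a)) ≤ t * d := by
        have := distφ_le h hax.1 (a + t • (x - a))
        rwa [add_sub_cancel_left, h.2.1, abs_of_nonneg ht.le, hax.2] at this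
      have hge : t * d ≤ distφ φ K (a + t • (x - a)) := by
        by_contra hc
        push_neg at hc
        set D := distφ φ K (a + t • (x - a)) with hD
        set ε : ℝ := min ((t - 1)/2) ((t * d - D)/(4*d)) with hε
        have hε0 : 0 < ε := lt_min (by linarith) (div_pos (by linarith) (by linarith))
        have hε1 : ε < t - 1 := lt_of_le_of_lt (min_le_left _ _) (by linarith)
        have hεd : 4 * ε * d ≤ t * d - D := by
          have := min_le_right ((t - 1)/2) ((t * d - D)/(4*d))
          rw [← hε] at this
          calc 4 * ε * d ≤ 4 * ((t * d - D)/(4*d)) * d := by nlinarith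
            _ = t * d - D := by field_simp
        have hkey := key ε hε0 hε1
        have htri := distφ_tri h ⟨a, hax.1⟩ (a + (t - ε) • (x - a)) (a + t • (x - a))
        have hv : (a + (t - ε) • (x - a)) - (a + t • (x - a)) = (-ε) • (x - a) := by
          rw [sub_smul, neg_smul]; abel
        rw [hv, h.2.1, abs_of_nonpos (by linarith), hax.2, hkey, ← hD] at htri
        nlinarith
      linarith
  set xt := a + t • (x - a) with hxt
  have hva : xt - a = t • (x - a) := by rw [hxt, add_sub_cancel_left]
  have haxt : a ∈ nearφ φ K xt := by
    refine ⟨hax.1, ?_⟩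
    rw [hva, h.2.1, abs_of_nonneg ht.le, hax.2, htS]
  have hdt0 : 0 < distφ φ K xt := by rw [htS]; positivity
  rw [rho_eq hφ hd hax, rho_eq hφ hdt0 haxt]
  rw [htS]
  apply le_antisymm
  · apply sSup_le
    rintro r ⟨s, hs0, rfl, hc⟩
    have hu0 : 0 ≤ s / t := div_nonneg hs0 ht.le
    have hB : ENNReal.ofReal (s/t) ∈ {r : ℝ≥0∞ | ∃ u : ℝ, 0 ≤ u ∧ r = ENNReal.ofReal u ∧
        distφ φ K (a + u • (xt - a)) = u * (t * d)} := by
      refine ⟨s/t, hu0, rfl, ?_⟩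
      rw [hva, smul_smul, div_mul_cancel₀ _ ht.ne', hc]
      field_simp
      ring
    have hr : ENNReal.ofReal s = ENNReal.ofReal t * ENNReal.ofReal (s/t) := by
      rw [← ENNReal.ofReal_mul ht.le, mul_div_cancel₀ _ ht.ne']
    rw [hr]
    exact mul_le_mul_right (le_sSup hB) _
  · have hBle : sSup {r : ℝ≥0∞ | ∃ u : ℝ, 0 ≤ u ∧ r = ENNReal.ofReal u ∧
        distφ φ K (a + u • (xt - a)) = u * (t * d)} ≤
        sSup {r : ℝ≥0∞ | ∃ s : ℝ, 0 ≤ s ∧ r = ENNReal.ofReal s ∧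
        distφ φ K (a + s • (x - a)) = s * d} / ENNReal.ofReal t := by
      apply sSup_le
      rintro r ⟨u, hu0, rfl, hc⟩
      rw [hva, smul_smul] at hc
      have hA : ENNReal.ofReal (u * t) ∈ {r : ℝ≥0∞ | ∃ s : ℝ, 0 ≤ s ∧ r = ENNReal.ofReal s ∧
          distφ φ K (a + s • (x - a)) = s * d} := ⟨u * t, by positivity, rfl, by rw [hc]; ring⟩
      calc ENNReal.ofReal u = ENNReal.ofReal (u * t) / ENNReal.ofReal t := by
            rw [← ENNReal.ofReal_div_of_pos ht, mul_div_cancel_right₀ _ ht.ne']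
        _ ≤ _ := ENNReal.div_le_div_right (le_sSup hA) _
    calc ENNReal.ofReal t * _ ≤ ENNReal.ofReal t * (_ / ENNReal.ofReal t) :=
          mul_le_mul_right hBle _
      _ = _ := ENNReal.mul_div_cancel (ENNReal.ofReal_pos.2 ht).ne' ENNReal.ofReal_ne_top
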